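/- Under the copy construction, an assignment α to the variables yᵢⱼ satisfies a term of ψ^∨ derived from term D of ψ if and only if the induced assignment β (defined by β(xᵢ) = 1 iff α satisfies ⋁ⱼ yᵢⱼ) satisfies D and, for each i with β(xᵢ)=1 appearing positively in D, exactly one yᵢⱼ is true under α while matching the chosen index; in particular, if β satisfies a unique term D of ψ, then α satisfies at most one term of ψ^∨. -/
import Mathlib


/-- Satisfaction of a term of the original DNF `ψ` by an assignment `β`. -/
def satPsiTerm {n : ℕ} (pos neg : Fin n → Bool) (β : Fin n → Bool) : Prop :=
  (∀ i, pos i = true → β i = true) ∧ (∀ i, neg i = true → β i = false)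

/-- Satisfaction of the term of `ψ^∨` derived from the original term `(pos, neg)`
by the choice `j` of copies on positive positions. -/
def satCopyTerm {n m : ℕ} (pos neg : Fin n → Bool) (j : Fin n → Fin m)
    (α : Fin n × Fin m → Bool) : Prop :=
  (∀ i, pos i = true →
      α (i, j i) = true ∧ ∀ j' : Fin m, j' ≠ j i → α (i, j') = false) ∧
  (∀ i, neg i = true → ∀ j' : Fin m, α (i, j') = false)

/-- The induced assignment `β` on the original variables: `β(xᵢ) = 1` iff `α`
satisfies `⋁ⱼ yᵢⱼ`. -/
def induced {n m : ℕ} (α : Fin n × Fin m → Bool) : Fin n → Bool :=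
  fun i => decide (∃ j' : Fin m, α (i, j') = true)

/-- An assignment `α` to the copy variables satisfies the term of `ψ^∨`
derived from term `D` of `ψ` iff the induced assignment `β` satisfies `D` and, for each
positive position `i` of `D`, exactly one copy `yᵢⱼ` is true under `α`, matching the
chosen index; in particular, if `β` satisfies a unique term `D` of `ψ` then `α`
satisfies at most one term of `ψ^∨`. -/
theorem copy_term_characterisation
    (n m ℓ : ℕ) (pos neg : Fin ℓ → Fin n → Bool) (α : Fin n × Fin m → Bool) :
    (∀ (t : Fin ℓ) (j : Fin n → Fin m),
      satCopyTerm (pos t) (neg t) j α ↔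
        (satPsiTerm (pos t) (neg t) (induced α) ∧
          ∀ i, pos t i = true →
            α (i, j i) = true ∧ ∀ j' : Fin m, α (i, j') = true → j' = j i)) ∧
    ((∃! t : Fin ℓ, satPsiTerm (pos t) (neg t) (induced α)) →
      ∀ (t₁ t₂ : Fin ℓ) (j₁ j₂ : Fin n → Fin m),
        satCopyTerm (pos t₁) (neg t₁) j₁ α → satCopyTerm (pos t₂) (neg t₂) j₂ α →
        t₁ = t₂ ∧ ∀ i, pos t₁ i = true → j₁ i = j₂ i) := by
  have key : ∀ (t : Fin ℓ) (j : Fin n → Fin m),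
      satCopyTerm (pos t) (neg t) j α ↔
        (satPsiTerm (pos t) (neg t) (induced α) ∧
          ∀ i, pos t i = true →
            α (i, j i) = true ∧ ∀ j' : Fin m, α (i, j') = true → j' = j i) := by
    intro t j
    constructor
    · rintro ⟨h1, h2⟩
      refine ⟨⟨?_, ?_⟩, ?_⟩
      · intro i hi
        simp only [induced, decide_eq_true_eq]
        exact ⟨j i, (h1 i hi).1⟩
      · intro i hi
        simp only [induced, decide_eq_false_iff_not]
        rintro ⟨j', hj'⟩
        exact absurd hj' (by simp [h2 i hi j'])
      · intro i hi
        refine ⟨(h1 i hi).1, fun j' hj' => ?_⟩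
        by_contra hne
        exact absurd hj' (by simp [(h1 i hi).2 j' hne])
    · rintro ⟨⟨hp, hn⟩, h⟩
      constructor
      · intro i hi
        refine ⟨(h i hi).1, fun j' hne => ?_⟩
        by_contra hc
        exact hne ((h i hi).2 j' (by simpa using hc))
      · intro i hi j'
        have := hn i hi
        simp only [induced, decide_eq_false_iff_not] at this
        by_contra hc
        exact this ⟨j', by simpa using hc⟩
  refine ⟨key, ?_⟩
  rintro ⟨t, ht, huniq⟩ t₁ t₂ j₁ j₂ hc1 hc2
  have k1 := (key t₁ j₁).mp hc1
  have k2 := (key t₂ j₂).mp hc2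
  have e1 : t₁ = t := huniq t₁ k1.1
  have e2 : t₂ = t := huniq t₂ k2.1
  subst e1; subst e2
  refine ⟨rfl, fun i hi => ?_⟩
  exact ((k2.2 i hi).2 (j₁ i) (k1.2 i hi).1)
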